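/- Let n be a positive integer, A a symmetric n×n real matrix with nonnegative entries, D the diagonal matrix with D_{ii} = Σ_{j=1}^n A_{ij}, and L = D − A. Then the fundamental matrix Ω = (I + L)^{-1} is doubly stochastic: all its entries are nonnegative, and each row and each column sums to 1. -/

import Mathlib

open scoped BigOperators

attribute [local instance] Matrix.linftyOpNormedRing Matrix.linftyOpNormedAlgebra

noncomputable section

namespace Stmt5Aux

variable {n : ℕ}

local instance : CompleteSpace (Matrix (Fin n) (Fin n) ℝ) :=
  FiniteDimensional.complete ℝ (Matrix (Fin n) (Fin n) ℝ)

lemma entry_norm_le (x : Matrix (Fin n) (Fin n) ℝ) (i j : Fin n) : ‖x i j‖ ≤ ‖x‖ := by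
  rw [← coe_nnnorm, ← coe_nnnorm, NNReal.coe_le_coe, Matrix.linfty_opNNNorm_def]
  exact le_trans
    (Finset.single_le_sum (f := fun k => ‖x i k‖₊) (fun k _ => zero_le) (Finset.mem_univ j))
    (Finset.le_sup (f := fun a => ∑ k, ‖x a k‖₊) (Finset.mem_univ i))

def entryAddHom (i j : Fin n) : Matrix (Fin n) (Fin n) ℝ →+ ℝ :=
  { toFun := fun x => x i j, map_zero' := rfl, map_add' := fun _ _ => rfl }

lemma entry_continuous (i j : Fin n) :
    Continuous (fun x : Matrix (Fin n) (Fin n) ℝ => x i j) :=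
  AddMonoidHomClass.continuous_of_bound (entryAddHom i j) 1
    (fun x => by
      show ‖x i j‖ ≤ 1 * ‖x‖
      rw [one_mul]; exact entry_norm_le x i j)

end Stmt5Aux

/-- For a symmetric nonnegative weight matrix `A` (undirected graph), the fundamental matrix
`Ω = (I + L)⁻¹` is doubly stochastic: all entries are nonnegative and each row and column
sums to `1`. -/
theorem stmt_5 (n : ℕ) (hn : 0 < n) (A : Matrix (Fin n) (Fin n) ℝ)
    (hA : ∀ i j, 0 ≤ A i j) (hsym : ∀ i j, A i j = A j i)
    (D : Matrix (Fin n) (Fin n) ℝ) (hD : D = Matrix.diagonal (fun i => ∑ j, A i j))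
    (L : Matrix (Fin n) (Fin n) ℝ) (hL : L = D - A) :
    (∀ i j, 0 ≤ (1 + L)⁻¹ i j) ∧
      (∀ i, ∑ j, (1 + L)⁻¹ i j = 1) ∧
      (∀ j, ∑ i, (1 + L)⁻¹ i j = 1) := by
  classical
  subst hD hL
  set d : Fin n → ℝ := fun i => ∑ j, A i j with hd
  set M : Matrix (Fin n) (Fin n) ℝ := 1 + (Matrix.diagonal d - A) with hM
  have hd0 : ∀ i, 0 ≤ d i := fun i => Finset.sum_nonneg fun j _ => hA i j
  set c : ℝ := 1 + ∑ i, d i with hc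
  have hdc : ∀ i, d i ≤ c - 1 := by
    intro i
    have : d i ≤ ∑ i, d i :=
      Finset.single_le_sum (fun k _ => hd0 k) (Finset.mem_univ i)
    simpa [hc] using this
  have hc1 : (1 : ℝ) ≤ c := by
    have : (0 : ℝ) ≤ ∑ i, d i := Finset.sum_nonneg fun i _ => hd0 i
    simp [hc]; linarith
  have hc0 : (0 : ℝ) < c := lt_of_lt_of_le one_pos hc1
  -- row sums of M are 1
  have hrowM : ∀ i, ∑ j, M i j = 1 := by
    intro i
    simp only [hM, Matrix.add_apply, Matrix.sub_apply, Matrix.one_apply,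
      Matrix.diagonal_apply]
    rw [Finset.sum_add_distrib, Finset.sum_sub_distrib]
    simp [hd]
  set B : Matrix (Fin n) (Fin n) ℝ := c • (1 : Matrix (Fin n) (Fin n) ℝ) - M with hB
  have hB0 : ∀ i j, 0 ≤ B i j := by
    intro i j
    by_cases h : i = j
    · subst h
      have := hdc i
      simp only [hB, hM, Matrix.sub_apply, Matrix.smul_apply, Matrix.add_apply,
        Matrix.one_apply_eq, Matrix.diagonal_apply_eq, smul_eq_mul, mul_one]
      have := hA i i
      linarith
    · simp only [hB, hM, Matrix.sub_apply, Matrix.smul_apply, Matrix.add_apply,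
        Matrix.one_apply_ne h, Matrix.diagonal_apply_ne _ h, smul_eq_mul, mul_zero]
      have := hA i j
      linarith
  have hrowB : ∀ i, ∑ j, B i j = c - 1 := by
    intro i
    simp only [hB, Matrix.sub_apply, Matrix.smul_apply, smul_eq_mul]
    rw [Finset.sum_sub_distrib, hrowM i, ← Finset.mul_sum]
    have : ∑ j, (1 : Matrix (Fin n) (Fin n) ℝ) i j = 1 := by
      simp [Matrix.one_apply]
    rw [this, mul_one]
  set t : Matrix (Fin n) (Fin n) ℝ := c⁻¹ • B with ht
  have ht0 : ∀ i j, 0 ≤ t i j := fun i j => by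
    have := hB0 i j
    simp only [ht, Matrix.smul_apply, smul_eq_mul]
    positivity
  have hrowt : ∀ i, ∑ j, t i j = c⁻¹ * (c - 1) := by
    intro i
    simp only [ht, Matrix.smul_apply, smul_eq_mul, ← Finset.mul_sum, hrowB i]
  have htlt : ‖t‖ < 1 := by
    rw [← coe_nnnorm, ← NNReal.coe_one, NNReal.coe_lt_coe, Matrix.linfty_opNNNorm_def]
    rw [Finset.sup_lt_iff (by norm_num : (⊥ : NNReal) < 1)]
    intro i _
    rw [← NNReal.coe_lt_coe, NNReal.coe_one, NNReal.coe_sum]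
    have : ∀ j, ((‖t i j‖₊ : ℝ)) = t i j := fun j => by
      rw [coe_nnnorm, Real.norm_eq_abs, abs_of_nonneg (ht0 i j)]
    rw [Finset.sum_congr rfl fun j _ => this j, hrowt i]
    rw [inv_mul_lt_iff₀ hc0]
    linarith
  have htpow0 : ∀ (k : ℕ) (i j : Fin n), 0 ≤ (t ^ k) i j := by
    intro k
    induction k with
    | zero => intro i j; by_cases h : i = j <;> simp [Matrix.one_apply, h]
    | succ m ih =>
      intro i j
      rw [pow_succ, Matrix.mul_apply]
      exact Finset.sum_nonneg fun k _ => mul_nonneg (ih i k) (ht0 k j)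
  have hsummable : Summable (fun k : ℕ => t ^ k) :=
    summable_geometric_of_norm_lt_one htlt
  set S : Matrix (Fin n) (Fin n) ℝ := ∑' k : ℕ, t ^ k with hS
  have hSentry : ∀ i j, S i j = ∑' k : ℕ, (t ^ k) i j := by
    intro i j
    exact (hsummable.hasSum.map
      (Stmt5Aux.entryAddHom i j)
      (Stmt5Aux.entry_continuous i j)).tsum_eq.symm
  have hS0 : ∀ i j, 0 ≤ S i j := by
    intro i j
    rw [hSentry i j]
    exact tsum_nonneg fun k => htpow0 k i j
  -- M = c • (1 - t)
  have hMt : M = c • ((1 : Matrix (Fin n) (Fin n) ℝ) - t) := by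
    rw [smul_sub, ht, smul_smul, mul_inv_cancel₀ (ne_of_gt hc0), one_smul, hB]
    abel
  have hleft : (c⁻¹ • S) * M = 1 := by
    rw [hMt, Matrix.smul_mul, Matrix.mul_smul, smul_smul,
      inv_mul_cancel₀ (ne_of_gt hc0), one_smul, hS]
    exact geom_series_mul_neg t htlt
  have hMinv : M⁻¹ = c⁻¹ • S := Matrix.inv_eq_left_inv hleft
  have hdet : IsUnit M.det := Matrix.isUnit_det_of_left_inverse hleft
  have hinvmul : M⁻¹ * M = 1 := Matrix.nonsing_inv_mul M hdet
  have hrowInv : ∀ i, ∑ j, M⁻¹ i j = 1 := by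
    intro i
    have : ∑ j, M⁻¹ i j = ∑ j, M⁻¹ i j * ∑ k, M j k := by
      simp [hrowM]
    rw [this]
    simp_rw [Finset.mul_sum]
    rw [Finset.sum_comm]
    have : ∀ k, ∑ j, M⁻¹ i j * M j k = (M⁻¹ * M) i k := fun k =>
      (Matrix.mul_apply).symm
    rw [Finset.sum_congr rfl fun k _ => this k, hinvmul]
    exact (show ∑ k, (1 : Matrix (Fin n) (Fin n) ℝ) i k = 1 by simp [Matrix.one_apply])
  have hMsymm : M.transpose = M := by
    rw [hM]
    ext i j
    simp only [Matrix.transpose_apply, Matrix.add_apply, Matrix.sub_apply,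
      Matrix.one_apply, Matrix.diagonal_apply, hsym i j]
    rcases eq_or_ne i j with h | h
    · subst h; rfl
    · simp [h, Ne.symm h]
  refine ⟨?_, hrowInv, ?_⟩
  · intro i j
    rw [hMinv]
    simp only [Matrix.smul_apply, smul_eq_mul]
    exact mul_nonneg (by positivity) (hS0 i j)
  · intro j
    have hTsym : M⁻¹.transpose = M⁻¹ := by rw [Matrix.transpose_nonsing_inv, hMsymm]
    have : ∀ i, M⁻¹ i j = M⁻¹ j i := by
      intro i
      conv_lhs => rw [← hTsym]
      rw [Matrix.transpose_apply]
    calc ∑ i, M⁻¹ i j = ∑ i, M⁻¹ j i := Finset.sum_congr rfl fun i _ => this i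
      _ = 1 := hrowInv j

end
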